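/- Let T be a triangulation of a surface S and let C be the embedding of a nonseparating one-sided 3-cycle of T. Cutting T along C produces a surface with a single boundary hexagon u′1u′2u′3v′1v′2v′3; capping this hexagon with a new vertex t′ joined to all six boundary vertices (six new triangular faces) yields a triangulation T′ of a closed surface S′ with eg(T′) = eg(T) − 1. -/

import Mathlib

open Finset

open scoped Classical

/-! Combinatorial model of triangulations of closed surfaces.
A triangulation is encoded by its finite set of triangular faces (3-element
vertex sets).  Surface-ness is expressed by: every edge lies in exactly two
faces, the link of every vertex is connected (hence a single cycle), and the
whole complex is connected. -/

variable {V : Type*} {W : Type*}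

/-- Two faces are adjacent when they share an edge. -/
def FaceAdj [DecidableEq V] (faces : Finset (Finset V)) (A B : Finset V) : Prop :=
  A ∈ faces ∧ B ∈ faces ∧ (A ∩ B).card = 2

/-- Two faces at a vertex `v` are adjacent when they share an edge through `v`. -/
def LinkAdj [DecidableEq V] (faces : Finset (Finset V)) (v : V) (A B : Finset V) : Prop :=
  A ∈ faces ∧ B ∈ faces ∧ v ∈ A ∩ B ∧ (A ∩ B).card = 2

/-- `faces` is the set of faces of a triangulation of a closed surface. -/
structure IsTriangulation [DecidableEq V] (faces : Finset (Finset V)) : Prop where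
  nonempty : faces.Nonempty
  card_three : ∀ F ∈ faces, F.card = 3
  edge_two_faces : ∀ e : Finset V, e.card = 2 → (∃ F ∈ faces, e ⊆ F) →
    (faces.filter fun F => e ⊆ F).card = 2
  link_connected : ∀ v : V, ∀ F ∈ faces, ∀ G ∈ faces, v ∈ F → v ∈ G →
    Relation.ReflTransGen (LinkAdj faces v) F G
  connected : ∀ F ∈ faces, ∀ G ∈ faces, Relation.ReflTransGen (FaceAdj faces) F G

/-- The vertices of a triangulation. -/
def vertexSet [DecidableEq V] (faces : Finset (Finset V)) : Finset V :=
  faces.biUnion id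

/-- The edges of a triangulation: the 2-element subsets of faces. -/
noncomputable def edgeSet [DecidableEq V] (faces : Finset (Finset V)) : Finset (Finset V) :=
  ((vertexSet faces).powersetCard 2).filter fun e => ∃ F ∈ faces, e ⊆ F

/-- Euler characteristic `n - e + f`. -/
noncomputable def eulerChar [DecidableEq V] (faces : Finset (Finset V)) : ℤ :=
  ((vertexSet faces).card : ℤ) - ((edgeSet faces).card : ℤ) + (faces.card : ℤ)

/-- Euler genus `2 - χ`. -/
noncomputable def eulerGenus [DecidableEq V] (faces : Finset (Finset V)) : ℤ :=
  2 - eulerChar faces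

/-- The degree of a vertex. -/
noncomputable def degree [DecidableEq V] (faces : Finset (Finset V)) (v : V) : ℕ :=
  ((edgeSet faces).filter fun e => v ∈ e).card

/-- Adjacency of vertices in a triangulation. -/
def Adj [DecidableEq V] (faces : Finset (Finset V)) (a b : V) : Prop :=
  a ≠ b ∧ ∃ F ∈ faces, ({a, b} : Finset V) ⊆ F

/-- A 3-cycle of the graph of the triangulation: three pairwise adjacent vertices. -/
noncomputable def IsTriCycle [DecidableEq V] (faces : Finset (Finset V)) (C : Finset V) : Prop :=
  C.card = 3 ∧ ∀ e ∈ C.powersetCard 2, e ∈ edgeSet faces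

/-- A nonfacial 3-cycle: a 3-cycle which does not bound a face. -/
noncomputable def IsNonfacialTriCycle [DecidableEq V] (faces : Finset (Finset V))
    (C : Finset V) : Prop :=
  IsTriCycle faces C ∧ C ∉ faces

/-- The number of 3-cycles containing a given edge (= common neighbours of its ends). -/
noncomputable def numTriCyclesOn [DecidableEq V] (faces : Finset (Finset V))
    (e : Finset V) : ℕ :=
  ((vertexSet faces).filter fun x => x ∉ e ∧ ∀ y ∈ e, Adj faces x y).card

/-- Contraction of the edge `ac` (the vertex `c` is identified with `a`,
the two faces containing `ac` collapse, multiple edges/faces merge). -/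
def contract [DecidableEq V] (faces : Finset (Finset V)) (a c : V) : Finset (Finset V) :=
  (faces.filter fun F => ¬ (a ∈ F ∧ c ∈ F)).image
    (Finset.image fun x => if x = c then a else x)

/-- A coherent cyclic orientation of one triangular face, given as the set of its three
directed edges. -/
def IsCyclicOrientation [DecidableEq V] (F : Finset V) (d : Finset (V × V)) : Prop :=
  d.card = 3 ∧ (∀ p ∈ d, p.1 ∈ F ∧ p.2 ∈ F ∧ p.1 ≠ p.2) ∧
  (∀ x ∈ F, (d.filter fun p => p.1 = x).card = 1 ∧ (d.filter fun p => p.2 = x).card = 1)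

/-- Orientability: the faces can be coherently oriented (each directed edge is used
by at most one oriented face). -/
def Orientable [DecidableEq V] (faces : Finset (Finset V)) : Prop :=
  ∃ or : Finset V → Finset (V × V),
    (∀ F ∈ faces, IsCyclicOrientation F (or F)) ∧
    (∀ F ∈ faces, ∀ G ∈ faces, F ≠ G → ∀ p ∈ or F, p ∉ or G)

/-- Two (connected, closed) triangulated surfaces are the same surface iff they have the
same Euler characteristic and the same orientability. -/
noncomputable def SameSurface [DecidableEq V] (f₁ f₂ : Finset (Finset V)) : Prop :=
  eulerChar f₁ = eulerChar f₂ ∧ (Orientable f₁ ↔ Orientable f₂)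

/-- The edge `ac` is contractible: contracting it yields again a triangulation
of the same surface. -/
noncomputable def Contractible [DecidableEq V] (faces : Finset (Finset V)) (a c : V) : Prop :=
  ({a, c} : Finset V) ∈ edgeSet faces ∧ IsTriangulation (contract faces a c) ∧
    SameSurface (contract faces a c) faces

/-- An edge (as a 2-element set) is contractible. -/
noncomputable def ContractibleEdge [DecidableEq V] (faces : Finset (Finset V))
    (e : Finset V) : Prop :=
  ∃ a c : V, e = ({a, c} : Finset V) ∧ Contractible faces a c

/-- An irreducible triangulation: no edge is contractible. -/
noncomputable def IrreducibleTri [DecidableEq V] (faces : Finset (Finset V)) : Prop :=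
  IsTriangulation faces ∧ ∀ e ∈ edgeSet faces, ¬ ContractibleEdge faces e

/-- Face adjacency avoiding the edges of the cycle with vertex set `C`. -/
def SeparatesRel [DecidableEq V] (faces : Finset (Finset V)) (C : Finset V)
    (A B : Finset V) : Prop :=
  A ∈ faces ∧ B ∈ faces ∧ (A ∩ B).card = 2 ∧ ¬ (A ∩ B ⊆ C)

/-- A cycle with vertex set `C` is nonseparating iff the complement of the embedded
curve is connected, i.e. any two faces are joined by a path of faces never crossing
an edge of the cycle. -/
def Nonseparating [DecidableEq V] (faces : Finset (Finset V)) (C : Finset V) : Prop :=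
  ∀ A ∈ faces, ∀ B ∈ faces, Relation.ReflTransGen (SeparatesRel faces C) A B

/-- A corner of the cycle `C`: a vertex of `C` together with a face containing it. -/
def Corner [DecidableEq V] (faces : Finset (Finset V)) (C : Finset V)
    (p : V × Finset V) : Prop :=
  p.1 ∈ C ∧ p.2 ∈ faces ∧ p.1 ∈ p.2

/-- Adjacency of corners of `C`: move inside a link avoiding the cycle, or move along
a face containing an edge of the cycle.  The connected components of this relation
are the boundary curves of a regular neighbourhood of the cycle. -/
def CornerRel [DecidableEq V] (faces : Finset (Finset V)) (C : Finset V)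
    (p q : V × Finset V) : Prop :=
  Corner faces C p ∧ Corner faces C q ∧
    ((p.1 = q.1 ∧ (p.2 ∩ q.2).card = 2 ∧ p.1 ∈ p.2 ∩ q.2 ∧ ¬ (p.2 ∩ q.2 ⊆ C)) ∨
     (p.2 = q.2 ∧ p.1 ≠ q.1))

/-- A cycle is one-sided iff a regular neighbourhood of it is a Möbius band, i.e. the
neighbourhood has a single boundary curve: all corners are connected. -/
def OneSided [DecidableEq V] (faces : Finset (Finset V)) (C : Finset V) : Prop :=
  ∀ p q, Corner faces C p → Corner faces C q →
    Relation.ReflTransGen (CornerRel faces C) p q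

/-- `ℓ` enumerates the link of `a` cyclically: the faces at `a` are exactly the
triangles `a ℓᵢ ℓᵢ₊₁`. -/
def IsLink [DecidableEq V] (faces : Finset (Finset V)) (a : V) (d : ℕ)
    (ℓ : ZMod d → V) : Prop :=
  Function.Injective ℓ ∧ (∀ i, ℓ i ≠ a) ∧
    ∀ F : Finset V, (F ∈ faces ∧ a ∈ F) ↔ ∃ i : ZMod d, F = {a, ℓ i, ℓ (i + 1)}

/-- Splitting the vertex `a` along `ℓ₀ a ℓₛ₋₁` (paper's `v₁ a vₛ`): the vertex `a`
becomes the two vertices `a₁ = Sum.inl a` and `a₂ = Sum.inr ()`. -/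
noncomputable def splitFaces [DecidableEq V] (faces : Finset (Finset V)) (a : V) {d : ℕ}
    (ℓ : ZMod d → V) (s : ℕ) : Finset (Finset (V ⊕ Unit)) :=
  ((faces.filter fun F => a ∉ F).image (Finset.image Sum.inl)) ∪
  ((Finset.range (s - 1)).image fun i =>
    ({Sum.inl a, Sum.inl (ℓ (i : ZMod d)), Sum.inl (ℓ ((i : ZMod d) + 1))} :
      Finset (V ⊕ Unit))) ∪
  ((Finset.Ico (s - 1) d).image fun i =>
    ({Sum.inr (), Sum.inl (ℓ (i : ZMod d)), Sum.inl (ℓ ((i : ZMod d) + 1))} :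
      Finset (V ⊕ Unit))) ∪
  {({Sum.inl a, Sum.inr (), Sum.inl (ℓ (0 : ZMod d))} : Finset (V ⊕ Unit)),
   ({Sum.inl a, Sum.inr (), Sum.inl (ℓ ((s - 1 : ℕ) : ZMod d))} : Finset (V ⊕ Unit))}

/-- Renaming of vertices when cutting along a two-sided 3-cycle `w₀w₁w₂`:
faces with `side = true` keep the original vertices, faces with `side = false`
get the new copies `Sum.inr i`. -/
noncomputable def renameTwoSided [DecidableEq V] (w : Fin 3 → V) (s : Bool) (x : V) : V ⊕ Fin 3 :=
  if x = w 0 then (if s then Sum.inl x else Sum.inr 0)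
  else if x = w 1 then (if s then Sum.inl x else Sum.inr 1)
  else if x = w 2 then (if s then Sum.inl x else Sum.inr 2)
  else Sum.inl x

/-- A coherent side assignment for cutting along the two-sided 3-cycle with vertex
set `C`: constant along link arcs avoiding the cycle, and the two faces on an edge
of the cycle lie on opposite sides. -/
def CoherentSide [DecidableEq V] (faces : Finset (Finset V)) (C : Finset V)
    (side : Finset V → Bool) : Prop :=
  (∀ F ∈ faces, ∀ G ∈ faces, (F ∩ G).card = 2 → ((F ∩ G) ∩ C).Nonempty →
      ¬ (F ∩ G ⊆ C) → side F = side G) ∧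
  (∀ F ∈ faces, ∀ G ∈ faces, F ≠ G → (F ∩ G).card = 2 → F ∩ G ⊆ C → side F ≠ side G)

/-- Cut along a two-sided 3-cycle and cap the two resulting boundary 3-cycles
with two new triangular faces. -/
noncomputable def cutCapTwoSided [DecidableEq V] (faces : Finset (Finset V)) (w : Fin 3 → V)
    (side : Finset V → Bool) : Finset (Finset (V ⊕ Fin 3)) :=
  (faces.image fun F => F.image (renameTwoSided w (side F))) ∪
  {({Sum.inl (w 0), Sum.inl (w 1), Sum.inl (w 2)} : Finset (V ⊕ Fin 3)),
   ({Sum.inr 0, Sum.inr 1, Sum.inr 2} : Finset (V ⊕ Fin 3))}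

/-- The six edges of the boundary hexagon `u₁u₂u₃v₁v₂v₃` produced by cutting along a
one-sided 3-cycle; `(i, true)` is `uᵢ₊₁` and `(i, false)` is `vᵢ₊₁`. -/
def hexEdges : Finset (Finset (Fin 3 × Bool)) :=
  { ({(0, true), (1, true)} : Finset (Fin 3 × Bool)),
    ({(1, true), (2, true)} : Finset (Fin 3 × Bool)),
    ({(2, true), (0, false)} : Finset (Fin 3 × Bool)),
    ({(0, false), (1, false)} : Finset (Fin 3 × Bool)),
    ({(1, false), (2, false)} : Finset (Fin 3 × Bool)),
    ({(2, false), (0, true)} : Finset (Fin 3 × Bool)) }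

/-- Renaming of vertices when cutting along a one-sided 3-cycle: the vertex `w i` of a
face becomes the copy `(i, σ i)` on the boundary hexagon. -/
noncomputable def renameOneSided [DecidableEq V] (w : Fin 3 → V) (σ : Fin 3 → Bool) (x : V) :
    V ⊕ (Fin 3 × Bool) ⊕ Unit :=
  if x = w 0 then Sum.inr (Sum.inl (0, σ 0))
  else if x = w 1 then Sum.inr (Sum.inl (1, σ 1))
  else if x = w 2 then Sum.inr (Sum.inl (2, σ 2))
  else Sum.inl x

/-- Coherence of the corner assignment `σ` for cutting along a one-sided 3-cycle
`w₀w₁w₂`: constant along link arcs avoiding the cycle, each face on an edge of the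
cycle produces an edge of the boundary hexagon, and each hexagon edge is produced by
exactly one face. -/
noncomputable def CoherentOneSided [DecidableEq V] (faces : Finset (Finset V)) (w : Fin 3 → V)
    (σ : Finset V → Fin 3 → Bool) : Prop :=
  (∀ F ∈ faces, ∀ G ∈ faces, ∀ i : Fin 3, (F ∩ G).card = 2 → w i ∈ F ∩ G →
      ¬ (F ∩ G ⊆ ({w 0, w 1, w 2} : Finset V)) → σ F i = σ G i) ∧
  (∀ F ∈ faces, ∀ i j : Fin 3, i ≠ j → ({w i, w j} : Finset V) ⊆ F →
      ({(i, σ F i), (j, σ F j)} : Finset (Fin 3 × Bool)) ∈ hexEdges) ∧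
  (∀ h ∈ hexEdges,
    (faces.filter fun F => ∃ i j : Fin 3, i ≠ j ∧ ({w i, w j} : Finset V) ⊆ F ∧
      ({(i, σ F i), (j, σ F j)} : Finset (Fin 3 × Bool)) = h).card = 1)

/-- Cut along a one-sided 3-cycle and cap the resulting boundary hexagon with a new
vertex `t' = Sum.inr (Sum.inr ())` joined to the six boundary vertices. -/
noncomputable def cutCapOneSided [DecidableEq V] (faces : Finset (Finset V)) (w : Fin 3 → V)
    (σ : Finset V → Fin 3 → Bool) : Finset (Finset (V ⊕ (Fin 3 × Bool) ⊕ Unit)) :=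
  (faces.image fun F => F.image (renameOneSided w (σ F))) ∪
  (hexEdges.image fun h =>
    insert (Sum.inr (Sum.inr ()))
      (h.image fun p => (Sum.inr (Sum.inl p) : V ⊕ (Fin 3 × Bool) ⊕ Unit)))

/-- Adding a handle: remove the faces `abc` and `def` and identify `d ↦ a`, `e ↦ b`,
`f ↦ c`. -/
noncomputable def glueHandle [DecidableEq V] (faces : Finset (Finset V)) (a b c d e f : V) :
    Finset (Finset V) :=
  ((faces \ {({a, b, c} : Finset V), ({d, e, f} : Finset V)}).image
    (Finset.image fun x => if x = d then a else if x = e then b else if x = f then c else x))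

/-- Adding a crosscap at a degree six vertex `t` with link `ℓ₀ … ℓ₅`: remove `t` with
its incident edges and faces and identify opposite vertices of the hexagonal hole. -/
noncomputable def addCrosscap [DecidableEq V] (faces : Finset (Finset V)) (t : V) (ℓ : ZMod 6 → V) :
    Finset (Finset V) :=
  (faces.filter fun F => t ∉ F).image
    (Finset.image fun x =>
      if x = ℓ 3 then ℓ 0 else if x = ℓ 4 then ℓ 1 else if x = ℓ 5 then ℓ 2 else x)

/-- Connected sum of two triangulations along the faces `abc` and `def`. -/
noncomputable def glueSum [DecidableEq V] [DecidableEq W] (f₁ : Finset (Finset V))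
    (f₂ : Finset (Finset W)) (a b c : V) (d e f : W) : Finset (Finset (V ⊕ W)) :=
  ((f₁.erase {a, b, c}).image (Finset.image Sum.inl)) ∪
  ((f₂.erase {d, e, f}).image (Finset.image fun y =>
    if y = d then Sum.inl a else if y = e then Sum.inl b
    else if y = f then Sum.inl c else (Sum.inr y : V ⊕ W)))

section Stmt8Aux

open Relation

variable [DecidableEq V] {w : Fin 3 → V} {σ : Finset V → Fin 3 → Bool}

/-- Double counting: in a triangulation-like complex, `2E = 3F`. -/
private lemma two_mul_card_edgeSet (faces : Finset (Finset V))
    (h3 : ∀ F ∈ faces, F.card = 3)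
    (h2 : ∀ e : Finset V, e.card = 2 → (∃ F ∈ faces, e ⊆ F) →
      (faces.filter fun F => e ⊆ F).card = 2) :
    2 * (edgeSet faces).card = 3 * faces.card := by
  have key : ∑ e ∈ edgeSet faces, (faces.filter fun F => e ⊆ F).card
      = ∑ F ∈ faces, ((edgeSet faces).filter fun e => e ⊆ F).card := by
    simp only [Finset.card_filter]
    exact Finset.sum_comm
  have hL : ∑ e ∈ edgeSet faces, (faces.filter fun F => e ⊆ F).card
      = 2 * (edgeSet faces).card := by
    rw [Finset.sum_congr rfl fun e he => ?_, Finset.sum_const, smul_eq_mul, mul_comm]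
    simp only [edgeSet, Finset.mem_filter, Finset.mem_powersetCard] at he
    exact h2 e he.1.2 he.2
  have hR : ∑ F ∈ faces, ((edgeSet faces).filter fun e => e ⊆ F).card
      = 3 * faces.card := by
    rw [Finset.sum_congr rfl fun F hF => ?_, Finset.sum_const, smul_eq_mul, mul_comm]
    have hFv : F ⊆ vertexSet faces := fun x hx => Finset.mem_biUnion.2 ⟨F, hF, hx⟩
    have heq : (edgeSet faces).filter (fun e => e ⊆ F) = F.powersetCard 2 := by
      ext e
      simp only [edgeSet, Finset.mem_filter, Finset.mem_powersetCard]
      constructor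
      · rintro ⟨⟨⟨-, hc⟩, -⟩, hsub⟩; exact ⟨hsub, hc⟩
      · rintro ⟨hsub, hc⟩; exact ⟨⟨⟨hsub.trans hFv, hc⟩, ⟨F, hF, hsub⟩⟩, hsub⟩
    rw [heq, Finset.card_powersetCard, h3 F hF]
    rfl
  omega

/-- The vertex set of the cut cycle. -/
private def Cset (w : Fin 3 → V) : Finset V := {w 0, w 1, w 2}

/-- Renamed face. -/
private noncomputable def rnF (w : Fin 3 → V) (σ : Finset V → Fin 3 → Bool) (F : Finset V) :
    Finset (V ⊕ (Fin 3 × Bool) ⊕ Unit) :=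
  F.image (renameOneSided w (σ F))

/-- The apex vertex. -/
private noncomputable def ap : V ⊕ (Fin 3 × Bool) ⊕ Unit := Sum.inr (Sum.inr ())

/-- Cap face over a hexagon edge. -/
private noncomputable def capF (h : Finset (Fin 3 × Bool)) : Finset (V ⊕ (Fin 3 × Bool) ⊕ Unit) :=
  insert ap (h.image fun p => Sum.inr (Sum.inl p))

private lemma cut_eq (faces : Finset (Finset V)) :
    cutCapOneSided faces w σ = faces.image (rnF w σ) ∪ hexEdges.image (capF (V := V)) := rfl

private lemma renameOneSided_eq_inl {b : Fin 3 → Bool} {z x : V} :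
    renameOneSided w b z = Sum.inl x ↔ z = x ∧ x ∉ Cset w := by
  unfold renameOneSided Cset
  split_ifs with h0 h1 h2 <;> simp_all <;> aesop

private lemma renameOneSided_eval_w (hw : Function.Injective w) {b : Fin 3 → Bool} (i : Fin 3) :
    renameOneSided w b (w i) = Sum.inr (Sum.inl (i, b i)) := by
  have h01 : w 0 ≠ w 1 := fun hh => by simpa using hw hh
  have h02 : w 0 ≠ w 2 := fun hh => by simpa using hw hh
  have h12 : w 1 ≠ w 2 := fun hh => by simpa using hw hh
  fin_cases i <;> unfold renameOneSided <;>
    simp [h01, h02, h12, h01.symm, h02.symm, h12.symm]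

private lemma renameOneSided_eval_offC {b : Fin 3 → Bool} {x : V} (hx : x ∉ Cset w) :
    renameOneSided w b x = Sum.inl x := by
  unfold renameOneSided
  simp only [Cset, Finset.mem_insert, Finset.mem_singleton, not_or] at hx
  rw [if_neg hx.1, if_neg hx.2.1, if_neg hx.2.2]

private lemma renameOneSided_eq_hex (hw : Function.Injective w) {b : Fin 3 → Bool} {z : V}
    {i : Fin 3} {c : Bool} :
    renameOneSided w b z = Sum.inr (Sum.inl (i, c)) ↔ z = w i ∧ b i = c := by
  constructor
  · intro hz
    have hmem : ∃ j : Fin 3, z = w j := by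
      by_contra hcon
      push_neg at hcon
      rw [renameOneSided_eval_offC (by simp only [Cset, Finset.mem_insert,
        Finset.mem_singleton, not_or]; exact ⟨hcon 0, hcon 1, hcon 2⟩)] at hz
      simp at hz
    obtain ⟨j, rfl⟩ := hmem
    rw [renameOneSided_eval_w hw] at hz
    simp only [Sum.inr.injEq, Sum.inl.injEq, Prod.mk.injEq] at hz
    obtain ⟨rfl, rfl⟩ := hz
    exact ⟨rfl, rfl⟩
  · rintro ⟨rfl, rfl⟩; exact renameOneSided_eval_w hw _

private lemma renameOneSided_ne_ap {b : Fin 3 → Bool} {z : V} :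
    renameOneSided w b z ≠ ap := by
  unfold renameOneSided ap
  split_ifs <;> simp

private lemma renameOneSided_inj (hw : Function.Injective w) {b : Fin 3 → Bool} :
    Function.Injective (renameOneSided w b) := by
  intro z z' hzz
  rcases hv : renameOneSided w b z with x | p | u
  · rw [hv] at hzz
    obtain ⟨rfl, -⟩ := renameOneSided_eq_inl.1 hv
    obtain ⟨rfl, -⟩ := renameOneSided_eq_inl.1 hzz.symm
    rfl
  · obtain ⟨i, c⟩ := p
    rw [hv] at hzz
    obtain ⟨rfl, -⟩ := (renameOneSided_eq_hex hw).1 hv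
    obtain ⟨rfl, -⟩ := (renameOneSided_eq_hex hw).1 hzz.symm
    rfl
  · exact absurd (by rw [hv]; rfl) (renameOneSided_ne_ap (z := z))

/-! ### Membership lemmas -/

private lemma mem_rnF_inl {F : Finset V} {x : V} :
    Sum.inl x ∈ rnF w σ F ↔ x ∈ F ∧ x ∉ Cset w := by
  constructor
  · rintro hx
    obtain ⟨z, hz, hzx⟩ := Finset.mem_image.1 hx
    obtain ⟨rfl, hC⟩ := renameOneSided_eq_inl.1 hzx
    exact ⟨hz, hC⟩
  · rintro ⟨hxF, hC⟩
    exact Finset.mem_image.2 ⟨x, hxF, renameOneSided_eval_offC hC⟩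

private lemma mem_rnF_hex (hw : Function.Injective w) {F : Finset V} {i : Fin 3} {c : Bool} :
    Sum.inr (Sum.inl (i, c)) ∈ rnF w σ F ↔ w i ∈ F ∧ σ F i = c := by
  constructor
  · rintro hx
    obtain ⟨z, hz, hzx⟩ := Finset.mem_image.1 hx
    obtain ⟨rfl, hc⟩ := (renameOneSided_eq_hex hw).1 hzx
    exact ⟨hz, hc⟩
  · rintro ⟨hxF, hc⟩
    exact Finset.mem_image.2 ⟨w i, hxF, by rw [renameOneSided_eval_w hw, hc]⟩

private lemma ap_not_mem_rnF {F : Finset V} : ap ∉ rnF w σ F := by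
  intro hx
  obtain ⟨z, -, hzx⟩ := Finset.mem_image.1 hx
  exact renameOneSided_ne_ap hzx

private lemma mem_capF_iff {h : Finset (Fin 3 × Bool)} {u : V ⊕ (Fin 3 × Bool) ⊕ Unit} :
    u ∈ capF h ↔ u = ap ∨ ∃ p ∈ h, u = Sum.inr (Sum.inl p) := by
  simp only [capF, Finset.mem_insert, Finset.mem_image]
  constructor
  · rintro (rfl | ⟨p, hp, rfl⟩)
    · exact Or.inl rfl
    · exact Or.inr ⟨p, hp, rfl⟩
  · rintro (rfl | ⟨p, hp, rfl⟩)
    · exact Or.inl rfl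
    · exact Or.inr ⟨p, hp, rfl⟩

private lemma inl_not_mem_capF {h : Finset (Fin 3 × Bool)} {x : V} :
    (Sum.inl x : V ⊕ (Fin 3 × Bool) ⊕ Unit) ∉ capF h := by
  rw [mem_capF_iff]
  rintro (hc | ⟨p, -, hc⟩) <;> simp [ap] at hc

private lemma hex_mem_capF {h : Finset (Fin 3 × Bool)} {p : Fin 3 × Bool} :
    (Sum.inr (Sum.inl p) : V ⊕ (Fin 3 × Bool) ⊕ Unit) ∈ capF h ↔ p ∈ h := by
  rw [mem_capF_iff]
  constructor
  · rintro (hc | ⟨q, hq, hc⟩)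
    · simp [ap] at hc
    · simp only [Sum.inr.injEq, Sum.inl.injEq] at hc; rwa [hc]
  · intro hp; exact Or.inr ⟨p, hp, rfl⟩

private lemma ap_mem_capF {h : Finset (Fin 3 × Bool)} : ap (V := V) ∈ capF h :=
  Finset.mem_insert_self _ _

private lemma mem_cut {faces : Finset (Finset V)} {A : Finset (V ⊕ (Fin 3 × Bool) ⊕ Unit)} :
    A ∈ cutCapOneSided faces w σ ↔
      (∃ F ∈ faces, A = rnF w σ F) ∨ ∃ h ∈ hexEdges, A = capF h := by
  rw [cut_eq]
  simp only [Finset.mem_union, Finset.mem_image]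
  constructor
  · rintro (⟨F, hF, rfl⟩ | ⟨hh, hmem, rfl⟩)
    · exact Or.inl ⟨F, hF, rfl⟩
    · exact Or.inr ⟨hh, hmem, rfl⟩
  · rintro (⟨F, hF, rfl⟩ | ⟨hh, hmem, rfl⟩)
    · exact Or.inl ⟨F, hF, rfl⟩
    · exact Or.inr ⟨hh, hmem, rfl⟩

private lemma rnF_mem_cut {faces : Finset (Finset V)} {F : Finset V} (hF : F ∈ faces) :
    rnF w σ F ∈ cutCapOneSided faces w σ := mem_cut.2 (Or.inl ⟨F, hF, rfl⟩)

private lemma capF_mem_cut {faces : Finset (Finset V)} {h : Finset (Fin 3 × Bool)}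
    (hh : h ∈ hexEdges) : capF (V := V) h ∈ cutCapOneSided faces w σ :=
  mem_cut.2 (Or.inr ⟨h, hh, rfl⟩)

/-! ### Injectivity and cardinality -/

private lemma card_rnF (hw : Function.Injective w) (F : Finset V) :
    (rnF w σ F).card = F.card :=
  Finset.card_image_of_injective _ (renameOneSided_inj hw)

private lemma rnF_inj (hw : Function.Injective w) :
    Function.Injective (rnF (V := V) w σ) := by
  intro F G hFG
  ext x
  by_cases hx : x ∈ Cset w
  · simp only [Cset, Finset.mem_insert, Finset.mem_singleton] at hx
    obtain (rfl | rfl | rfl) := hx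
    all_goals
      constructor <;> intro hm
      · have := (mem_rnF_hex (σ := σ) hw).2 ⟨hm, rfl⟩
        rw [hFG] at this
        exact ((mem_rnF_hex hw).1 this).1
      · have := (mem_rnF_hex (σ := σ) hw).2 ⟨hm, rfl⟩
        rw [← hFG] at this
        exact ((mem_rnF_hex hw).1 this).1
  · constructor <;> intro hm
    · have := (mem_rnF_inl (σ := σ)).2 ⟨hm, hx⟩
      rw [hFG] at this
      exact (mem_rnF_inl.1 this).1
    · have := (mem_rnF_inl (σ := σ)).2 ⟨hm, hx⟩
      rw [← hFG] at this
      exact (mem_rnF_inl.1 this).1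

private lemma ap_not_mem_heximg {h : Finset (Fin 3 × Bool)} :
    ap (V := V) ∉ h.image (fun p => Sum.inr (Sum.inl p)) := by
  simp only [Finset.mem_image]
  rintro ⟨p, -, hc⟩
  simp [ap] at hc

private lemma card_capF (h : Finset (Fin 3 × Bool)) : (capF (V := V) h).card = h.card + 1 := by
  rw [capF, Finset.card_insert_of_notMem ap_not_mem_heximg,
    Finset.card_image_of_injective _ (by intro p q hpq; simpa using hpq)]

private lemma capF_inj : Function.Injective (capF (V := V)) := by
  intro h h' hhh
  have : ∀ p : Fin 3 × Bool, p ∈ h ↔ p ∈ h' := by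
    intro p
    rw [← hex_mem_capF (V := V) (h := h), ← hex_mem_capF (V := V) (h := h'), hhh]
  exact Finset.ext this

/-! ### Intersections -/

private lemma inter_rnF_subset (hw : Function.Injective w) {F G : Finset V} :
    rnF w σ F ∩ rnF w σ G ⊆ (F ∩ G).image (renameOneSided w (σ F)) := by
  intro u hu
  rw [Finset.mem_inter] at hu
  rcases u with x | ⟨i, c⟩ | u
  · obtain ⟨hxF, hxC⟩ := mem_rnF_inl.1 hu.1
    obtain ⟨hxG, -⟩ := mem_rnF_inl.1 hu.2
    exact Finset.mem_image.2 ⟨x, Finset.mem_inter.2 ⟨hxF, hxG⟩, renameOneSided_eval_offC hxC⟩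
  · obtain ⟨hwF, hc⟩ := (mem_rnF_hex hw).1 hu.1
    obtain ⟨hwG, -⟩ := (mem_rnF_hex hw).1 hu.2
    exact Finset.mem_image.2 ⟨w i, Finset.mem_inter.2 ⟨hwF, hwG⟩,
      by rw [renameOneSided_eval_w hw, hc]⟩
  · exact absurd hu.1 (by cases u; exact ap_not_mem_rnF)

private lemma inter_rnF_eq {faces : Finset (Finset V)} (hσ : CoherentOneSided faces w σ)
    (hw : Function.Injective w) {F G : Finset V} (hF : F ∈ faces) (hG : G ∈ faces)
    (h2 : (F ∩ G).card = 2) (hnc : ¬ (F ∩ G) ⊆ Cset w) :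
    rnF w σ F ∩ rnF w σ G = (F ∩ G).image (renameOneSided w (σ F)) := by
  refine Finset.Subset.antisymm (inter_rnF_subset hw) ?_
  intro u hu
  obtain ⟨z, hz, rfl⟩ := Finset.mem_image.1 hu
  rw [Finset.mem_inter] at hz
  by_cases hzC : z ∈ Cset w
  · simp only [Cset, Finset.mem_insert, Finset.mem_singleton] at hzC
    have key : ∀ i : Fin 3, z = w i →
        renameOneSided w (σ F) z ∈ rnF w σ F ∩ rnF w σ G := by
      rintro i rfl
      have hσi : σ F i = σ G i :=
        hσ.1 F hF G hG i h2 (Finset.mem_inter.2 hz) hnc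
      rw [renameOneSided_eval_w hw]
      refine Finset.mem_inter.2 ⟨(mem_rnF_hex hw).2 ⟨hz.1, rfl⟩,
        (mem_rnF_hex hw).2 ⟨hz.2, hσi.symm⟩⟩
    obtain (rfl | rfl | rfl) := hzC
    · exact key 0 rfl
    · exact key 1 rfl
    · exact key 2 rfl
  · rw [renameOneSided_eval_offC hzC]
    exact Finset.mem_inter.2 ⟨mem_rnF_inl.2 ⟨hz.1, hzC⟩, mem_rnF_inl.2 ⟨hz.2, hzC⟩⟩

/-! ### Hexagon facts -/

private lemma hex_card : ∀ h ∈ hexEdges, h.card = 2 := by decide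
private lemma hex_fst_ne : ∀ h ∈ hexEdges, ∀ p ∈ h, ∀ q ∈ h, p ≠ q → p.1 ≠ q.1 := by decide
private lemma hex_filter_card : ∀ p : Fin 3 × Bool, (hexEdges.filter fun h => p ∈ h).card = 2 := by
  decide
private lemma hex_cover : ∀ p : Fin 3 × Bool, ∃ h ∈ hexEdges, p ∈ h := by decide
private lemma hexEdges_card : hexEdges.card = 6 := by decide
private lemma hex_inter_le : ∀ h₁ ∈ hexEdges, ∀ h₂ ∈ hexEdges, h₁ ≠ h₂ →
    (h₁ ∩ h₂).card ≤ 1 := by decide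
private lemma hexEdges_nonempty : hexEdges.Nonempty :=
  ⟨{(0, true), (1, true)}, by decide⟩

private def hexRel (a b : Finset (Fin 3 × Bool)) : Prop :=
  a ∈ hexEdges ∧ b ∈ hexEdges ∧ (a ∩ b).card = 1

private lemma hexRel_symm : Symmetric hexRel := by
  rintro a b ⟨ha, hb, hc⟩
  exact ⟨hb, ha, by rwa [Finset.inter_comm]⟩

private lemma hexConn : ∀ h₁ ∈ hexEdges, ∀ h₂ ∈ hexEdges,
    Relation.ReflTransGen hexRel h₁ h₂ := by
  have base : ∀ h ∈ hexEdges,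
      Relation.ReflTransGen hexRel ({(0, true), (1, true)} : Finset (Fin 3 × Bool)) h := by
    intro h hh
    have s12 : hexRel {(0, true), (1, true)} {(1, true), (2, true)} := by
      refine ⟨by decide, by decide, by decide⟩
    have s23 : hexRel {(1, true), (2, true)} {(2, true), (0, false)} := by
      refine ⟨by decide, by decide, by decide⟩
    have s34 : hexRel {(2, true), (0, false)} {(0, false), (1, false)} := by
      refine ⟨by decide, by decide, by decide⟩
    have s45 : hexRel {(0, false), (1, false)} {(1, false), (2, false)} := by
      refine ⟨by decide, by decide, by decide⟩
    have s16 : hexRel {(0, true), (1, true)} {(2, false), (0, true)} := by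
      refine ⟨by decide, by decide, by decide⟩
    simp only [hexEdges, Finset.mem_insert, Finset.mem_singleton] at hh
    rcases hh with rfl | rfl | rfl | rfl | rfl | rfl
    · exact .refl
    · exact .single s12
    · exact (Relation.ReflTransGen.single s12).tail s23
    · exact ((Relation.ReflTransGen.single s12).tail s23).tail s34
    · exact (((Relation.ReflTransGen.single s12).tail s23).tail s34).tail s45
    · exact .single s16
  intro h₁ hh₁ h₂ hh₂
  exact ((show Symmetric (Relation.ReflTransGen hexRel) from fun a b hab => by
    haveI : Std.Symm hexRel := ⟨fun x y hh => hexRel_symm hh⟩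
    exact Std.Symm.symm _ _ hab) (base h₁ hh₁)).trans (base h₂ hh₂)

/-! ### Cap intersections -/

private lemma capF_inter (h₁ h₂ : Finset (Fin 3 × Bool)) :
    capF (V := V) h₁ ∩ capF h₂ =
      insert ap ((h₁ ∩ h₂).image fun p => Sum.inr (Sum.inl p)) := by
  ext u
  rw [Finset.mem_inter, mem_capF_iff, mem_capF_iff, Finset.mem_insert, Finset.mem_image]
  constructor
  · rintro ⟨(rfl | ⟨p, hp, rfl⟩), h2⟩
    · exact Or.inl rfl
    · rcases h2 with hc | ⟨q, hq, hc⟩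
      · simp [ap] at hc
      · simp only [Sum.inr.injEq, Sum.inl.injEq] at hc
        subst hc
        exact Or.inr ⟨p, Finset.mem_inter.2 ⟨hp, hq⟩, rfl⟩
  · rintro (rfl | ⟨p, hp, rfl⟩)
    · exact ⟨Or.inl rfl, Or.inl rfl⟩
    · rw [Finset.mem_inter] at hp
      exact ⟨Or.inr ⟨p, hp.1, rfl⟩, Or.inr ⟨p, hp.2, rfl⟩⟩

private lemma capF_inter_card (h₁ h₂ : Finset (Fin 3 × Bool)) :
    (capF (V := V) h₁ ∩ capF h₂).card = (h₁ ∩ h₂).card + 1 := by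
  rw [capF_inter, Finset.card_insert_of_notMem ap_not_mem_heximg,
    Finset.card_image_of_injective _ (by intro p q hpq; simpa using hpq)]

private lemma inter_rnF_capF_subset {F : Finset V} {h : Finset (Fin 3 × Bool)} :
    rnF w σ F ∩ capF h ⊆ h.image fun p => Sum.inr (Sum.inl p) := by
  intro u hu
  rw [Finset.mem_inter] at hu
  rcases mem_capF_iff.1 hu.2 with rfl | ⟨p, hp, rfl⟩
  · exact absurd hu.1 ap_not_mem_rnF
  · exact Finset.mem_image.2 ⟨p, hp, rfl⟩

private lemma hexpair_card {i j : Fin 3} {ci cj : Bool} (hij : i ≠ j) :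
    ({(i, ci), (j, cj)} : Finset (Fin 3 × Bool)).card = 2 :=
  Finset.card_pair (by simp [Prod.ext_iff]; intro hc; exact absurd hc hij)

private lemma inter_rnF_capF_eq (hw : Function.Injective w) {F : Finset V} {i j : Fin 3}
    (hij : i ≠ j) (hi : w i ∈ F) (hj : w j ∈ F) :
    rnF w σ F ∩ capF {(i, σ F i), (j, σ F j)} =
      ({(i, σ F i), (j, σ F j)} : Finset (Fin 3 × Bool)).image fun p => Sum.inr (Sum.inl p) := by
  refine Finset.Subset.antisymm inter_rnF_capF_subset ?_
  intro u hu
  obtain ⟨p, hp, rfl⟩ := Finset.mem_image.1 hu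
  rw [Finset.mem_insert, Finset.mem_singleton] at hp
  rcases hp with rfl | rfl
  · exact Finset.mem_inter.2 ⟨(mem_rnF_hex hw).2 ⟨hi, rfl⟩,
      hex_mem_capF.2 (by simp)⟩
  · exact Finset.mem_inter.2 ⟨(mem_rnF_hex hw).2 ⟨hj, rfl⟩,
      hex_mem_capF.2 (by simp)⟩

/-! ### Lifted adjacency -/

private lemma linkAdj_rnF {faces : Finset (Finset V)} (hσ : CoherentOneSided faces w σ)
    (hw : Function.Injective w) {x : V} (hx : x ∉ Cset w) {F G : Finset V}
    (hFG : LinkAdj faces x F G) :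
    LinkAdj (cutCapOneSided faces w σ) (Sum.inl x) (rnF w σ F) (rnF w σ G) := by
  obtain ⟨hF, hG, hxm, h2⟩ := hFG
  have hnc : ¬ (F ∩ G) ⊆ Cset w := fun hc => hx (hc hxm)
  have heq := inter_rnF_eq hσ hw hF hG h2 hnc
  refine ⟨rnF_mem_cut hF, rnF_mem_cut hG, ?_, ?_⟩
  · rw [heq]
    exact Finset.mem_image.2 ⟨x, hxm, renameOneSided_eval_offC hx⟩
  · rw [heq, Finset.card_image_of_injective _ (renameOneSided_inj hw), h2]

private lemma faceAdj_rnF {faces : Finset (Finset V)} (hσ : CoherentOneSided faces w σ)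
    (hw : Function.Injective w) {F G : Finset V}
    (hFG : SeparatesRel faces (Cset w) F G) :
    FaceAdj (cutCapOneSided faces w σ) (rnF w σ F) (rnF w σ G) := by
  obtain ⟨hF, hG, h2, hnc⟩ := hFG
  have heq := inter_rnF_eq hσ hw hF hG h2 hnc
  exact ⟨rnF_mem_cut hF, rnF_mem_cut hG,
    by rw [heq, Finset.card_image_of_injective _ (renameOneSided_inj hw), h2]⟩

/-! ### Counting -/

private lemma edgeSet_spec {faces : Finset (Finset V)} {e : Finset V} (he : e ∈ edgeSet faces) :
    e.card = 2 ∧ ∃ F ∈ faces, e ⊆ F := by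
  simp only [edgeSet, Finset.mem_filter, Finset.mem_powersetCard] at he
  exact ⟨he.1.2, he.2⟩

private lemma Cset_card (hw : Function.Injective w) : (Cset w).card = 3 := by
  have h01 : w 0 ≠ w 1 := fun hc => by simpa using hw hc
  have h02 : w 0 ≠ w 2 := fun hc => by simpa using hw hc
  have h12 : w 1 ≠ w 2 := fun hc => by simpa using hw hc
  rw [Cset, Finset.card_insert_of_notMem (by simp [h01, h02]), Finset.card_pair h12]

private lemma cyc_edge_mem {faces : Finset (Finset V)} (hw : Function.Injective w)
    (hcyc : IsTriCycle faces {w 0, w 1, w 2}) {i j : Fin 3} (hij : i ≠ j) :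
    ({w i, w j} : Finset V) ∈ edgeSet faces := by
  apply hcyc.2
  rw [Finset.mem_powersetCard]
  refine ⟨?_, Finset.card_pair fun hc => hij (hw hc)⟩
  intro x hx
  rw [Finset.mem_insert, Finset.mem_singleton] at hx
  rcases hx with rfl | rfl
  · fin_cases i <;> simp
  · fin_cases j <;> simp

private lemma Cset_subset {faces : Finset (Finset V)} (hw : Function.Injective w)
    (hcyc : IsTriCycle faces {w 0, w 1, w 2}) : Cset w ⊆ vertexSet faces := by
  have key : ∀ i j : Fin 3, i ≠ j → w i ∈ vertexSet faces := by
    intro i j hij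
    have := cyc_edge_mem hw hcyc hij
    simp only [edgeSet, Finset.mem_filter, Finset.mem_powersetCard] at this
    exact this.1.1 (Finset.mem_insert_self _ _)
  intro x hx
  rw [Cset, Finset.mem_insert, Finset.mem_insert, Finset.mem_singleton] at hx
  rcases hx with rfl | rfl | rfl
  · exact key 0 1 (by decide)
  · exact key 1 0 (by decide)
  · exact key 2 0 (by decide)

private lemma cut_disjoint {faces : Finset (Finset V)} :
    Disjoint (faces.image (rnF w σ)) (hexEdges.image (capF (V := V))) := by
  rw [Finset.disjoint_left]
  rintro A hA hA'
  obtain ⟨F, -, rfl⟩ := Finset.mem_image.1 hA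
  obtain ⟨hh, -, heq⟩ := Finset.mem_image.1 hA'
  exact ap_not_mem_rnF (heq ▸ ap_mem_capF)

private lemma cut_card {faces : Finset (Finset V)} (hw : Function.Injective w) :
    (cutCapOneSided faces w σ).card = faces.card + 6 := by
  rw [cut_eq, Finset.card_union_of_disjoint cut_disjoint,
    Finset.card_image_of_injective _ (rnF_inj hw),
    Finset.card_image_of_injective _ capF_inj, hexEdges_card]

private lemma cut_vertexSet {faces : Finset (Finset V)} (hne : faces.Nonempty) :
    vertexSet (cutCapOneSided faces w σ) =
      ((vertexSet faces \ Cset w).image Sum.inl) ∪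
      ((Finset.univ : Finset (Fin 3 × Bool)).image fun p =>
        (Sum.inr (Sum.inl p) : V ⊕ (Fin 3 × Bool) ⊕ Unit)) ∪ {ap} := by
  ext u
  simp only [vertexSet, Finset.mem_biUnion, id_eq, Finset.mem_union, Finset.mem_image,
    Finset.mem_sdiff, Finset.mem_singleton, Finset.mem_univ, true_and]
  constructor
  · rintro ⟨A, hA, hu⟩
    rcases mem_cut.1 hA with ⟨F, hF, rfl⟩ | ⟨hh, hhm, rfl⟩
    · rcases u with x | ⟨i, c⟩ | u
      · obtain ⟨hxF, hxC⟩ := mem_rnF_inl.1 hu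
        exact Or.inl (Or.inl ⟨x, ⟨⟨F, hF, hxF⟩, hxC⟩, rfl⟩)
      · exact Or.inl (Or.inr ⟨(i, c), rfl⟩)
      · cases u; exact absurd hu ap_not_mem_rnF
    · rcases mem_capF_iff.1 hu with rfl | ⟨p, hp, rfl⟩
      · exact Or.inr rfl
      · exact Or.inl (Or.inr ⟨p, rfl⟩)
  · rintro ((⟨x, ⟨⟨F, hF, hxF⟩, hxC⟩, rfl⟩ | ⟨p, rfl⟩) | rfl)
    · exact ⟨rnF w σ F, rnF_mem_cut hF, mem_rnF_inl.2 ⟨hxF, hxC⟩⟩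
    · obtain ⟨hh, hhm, hph⟩ := hex_cover p
      exact ⟨capF hh, capF_mem_cut hhm, hex_mem_capF.2 hph⟩
    · obtain ⟨hh, hhm⟩ := hexEdges_nonempty
      exact ⟨capF hh, capF_mem_cut hhm, ap_mem_capF⟩

private lemma cut_vertexSet_card {faces : Finset (Finset V)} (hne : faces.Nonempty)
    (hw : Function.Injective w) (hC : Cset w ⊆ vertexSet faces) :
    (vertexSet (cutCapOneSided faces w σ)).card = (vertexSet faces).card + 4 := by
  rw [cut_vertexSet hne]
  have hd1 : Disjoint ((vertexSet faces \ Cset w).image (Sum.inl : V → _))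
      ((Finset.univ : Finset (Fin 3 × Bool)).image fun p =>
        (Sum.inr (Sum.inl p) : V ⊕ (Fin 3 × Bool) ⊕ Unit)) := by
    rw [Finset.disjoint_left]
    rintro u hu hu'
    obtain ⟨x, -, rfl⟩ := Finset.mem_image.1 hu
    obtain ⟨p, -, hc⟩ := Finset.mem_image.1 hu'
    exact absurd hc (by simp)
  have hd2 : Disjoint (((vertexSet faces \ Cset w).image (Sum.inl : V → _)) ∪
      ((Finset.univ : Finset (Fin 3 × Bool)).image fun p =>
        (Sum.inr (Sum.inl p) : V ⊕ (Fin 3 × Bool) ⊕ Unit))) ({ap} : Finset _) := by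
    rw [Finset.disjoint_right]
    rintro u hu hu'
    rw [Finset.mem_singleton] at hu
    subst hu
    rcases Finset.mem_union.1 hu' with hc | hc
    · obtain ⟨x, -, hc⟩ := Finset.mem_image.1 hc
      exact absurd hc (by simp [ap])
    · obtain ⟨p, -, hc⟩ := Finset.mem_image.1 hc
      exact absurd hc (by simp [ap])
  rw [Finset.card_union_of_disjoint hd2, Finset.card_union_of_disjoint hd1,
    Finset.card_image_of_injective _ Sum.inl_injective,
    Finset.card_image_of_injective _ (by intro p q hc; simpa using hc),
    Finset.card_sdiff_of_subset hC, Cset_card hw, Finset.card_singleton, Finset.card_univ]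
  have : 3 ≤ (vertexSet faces).card := by
    calc 3 = (Cset w).card := (Cset_card hw).symm
    _ ≤ _ := Finset.card_le_card hC
  simp only [Fintype.card_prod, Fintype.card_fin, Fintype.card_bool]
  omega

/-! ### Easy triangulation fields -/

private lemma cut_nonempty {faces : Finset (Finset V)} (hne : faces.Nonempty) :
    (cutCapOneSided faces w σ).Nonempty := by
  obtain ⟨F, hF⟩ := hne
  exact ⟨rnF w σ F, rnF_mem_cut hF⟩

private lemma cut_card_three {faces : Finset (Finset V)} (hw : Function.Injective w)
    (h3 : ∀ F ∈ faces, F.card = 3) :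
    ∀ A ∈ cutCapOneSided faces w σ, A.card = 3 := by
  intro A hA
  rcases mem_cut.1 hA with ⟨F, hF, rfl⟩ | ⟨hh, hhm, rfl⟩
  · rw [card_rnF hw, h3 F hF]
  · rw [card_capF, hex_card hh hhm]

/-! ### Edge-in-two-faces for the cut complex -/

private lemma wi_mem_Cset (i : Fin 3) : w i ∈ Cset w := by
  fin_cases i <;> simp [Cset]

private lemma sigma_eq_of_mem {faces : Finset (Finset V)} (hσ : CoherentOneSided faces w σ)
    (h3 : ∀ F ∈ faces, F.card = 3) {x : V} (hxC : x ∉ Cset w) {i : Fin 3} {F G : Finset V}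
    (hF : F ∈ faces) (hG : G ∈ faces) (hxF : x ∈ F) (hwF : w i ∈ F)
    (hxG : x ∈ G) (hwG : w i ∈ G) : σ F i = σ G i := by
  by_cases hFG : F = G
  · rw [hFG]
  · have hxw : x ≠ w i := fun hc => hxC (hc ▸ wi_mem_Cset i)
    have hsub : ({x, w i} : Finset V) ⊆ F ∩ G := by
      rw [Finset.insert_subset_iff, Finset.singleton_subset_iff]
      exact ⟨Finset.mem_inter.2 ⟨hxF, hxG⟩, Finset.mem_inter.2 ⟨hwF, hwG⟩⟩
    have hcard : (F ∩ G).card = 2 := by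
      have hle : (F ∩ G).card ≤ 3 :=
        le_trans (Finset.card_le_card Finset.inter_subset_left) (le_of_eq (h3 F hF))
      have hge : 2 ≤ (F ∩ G).card := by
        calc 2 = ({x, w i} : Finset V).card := (Finset.card_pair hxw).symm
        _ ≤ _ := Finset.card_le_card hsub
      have hne3 : (F ∩ G).card ≠ 3 := by
        intro hc
        apply hFG
        have h1 : F ∩ G = F := Finset.eq_of_subset_of_card_le Finset.inter_subset_left
          (by rw [hc, h3 F hF])
        have h2 : F ∩ G = G := Finset.eq_of_subset_of_card_le Finset.inter_subset_right
          (by rw [hc, h3 G hG])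
        rw [← h1, h2]
      omega
    exact hσ.1 F hF G hG i hcard (Finset.mem_inter.2 ⟨hwF, hwG⟩)
      (fun hc => hxC (hc (hsub (Finset.mem_insert_self _ _))))

private lemma e2f_inl_inl {faces : Finset (Finset V)} (hw : Function.Injective w)
    (h2f : ∀ e : Finset V, e.card = 2 → (∃ F ∈ faces, e ⊆ F) →
      (faces.filter fun F => e ⊆ F).card = 2)
    {x y : V} (hxy : x ≠ y) (hxC : x ∉ Cset w) (hyC : y ∉ Cset w)
    {F₀ : Finset V} (hF₀ : F₀ ∈ faces) (hx0 : x ∈ F₀) (hy0 : y ∈ F₀) :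
    ((cutCapOneSided faces w σ).filter fun A =>
      ({Sum.inl x, Sum.inl y} : Finset (V ⊕ (Fin 3 × Bool) ⊕ Unit)) ⊆ A).card = 2 := by
  have hset : ((cutCapOneSided faces w σ).filter fun A =>
      ({Sum.inl x, Sum.inl y} : Finset (V ⊕ (Fin 3 × Bool) ⊕ Unit)) ⊆ A)
      = (faces.filter fun F => ({x, y} : Finset V) ⊆ F).image (rnF w σ) := by
    ext A
    simp only [Finset.mem_filter, Finset.mem_image, Finset.insert_subset_iff,
      Finset.singleton_subset_iff]
    constructor
    · rintro ⟨hA, hu, hv⟩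
      rcases mem_cut.1 hA with ⟨F, hF, rfl⟩ | ⟨hh, hhm, rfl⟩
      · exact ⟨F, ⟨hF, (mem_rnF_inl.1 hu).1, (mem_rnF_inl.1 hv).1⟩, rfl⟩
      · exact absurd hu inl_not_mem_capF
    · rintro ⟨F, ⟨hF, hxF, hyF⟩, rfl⟩
      exact ⟨rnF_mem_cut hF, mem_rnF_inl.2 ⟨hxF, hxC⟩, mem_rnF_inl.2 ⟨hyF, hyC⟩⟩
  rw [hset, Finset.card_image_of_injective _ (rnF_inj hw)]
  exact h2f {x, y} (Finset.card_pair hxy) ⟨F₀, hF₀, by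
    rw [Finset.insert_subset_iff, Finset.singleton_subset_iff]; exact ⟨hx0, hy0⟩⟩

private lemma e2f_inl_hex {faces : Finset (Finset V)} (hw : Function.Injective w)
    (hσ : CoherentOneSided faces w σ) (h3 : ∀ F ∈ faces, F.card = 3)
    (h2f : ∀ e : Finset V, e.card = 2 → (∃ F ∈ faces, e ⊆ F) →
      (faces.filter fun F => e ⊆ F).card = 2)
    {x : V} (hxC : x ∉ Cset w) {i : Fin 3} {c : Bool}
    {F₀ : Finset V} (hF₀ : F₀ ∈ faces) (hx0 : x ∈ F₀) (hw0 : w i ∈ F₀) (hc0 : σ F₀ i = c) :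
    ((cutCapOneSided faces w σ).filter fun A =>
      ({Sum.inl x, Sum.inr (Sum.inl (i, c))} :
        Finset (V ⊕ (Fin 3 × Bool) ⊕ Unit)) ⊆ A).card = 2 := by
  have hxw : x ≠ w i := fun hc => hxC (hc ▸ wi_mem_Cset i)
  have hset : ((cutCapOneSided faces w σ).filter fun A =>
      ({Sum.inl x, Sum.inr (Sum.inl (i, c))} :
        Finset (V ⊕ (Fin 3 × Bool) ⊕ Unit)) ⊆ A)
      = (faces.filter fun F => ({x, w i} : Finset V) ⊆ F).image (rnF w σ) := by
    ext A
    simp only [Finset.mem_filter, Finset.mem_image, Finset.insert_subset_iff,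
      Finset.singleton_subset_iff]
    constructor
    · rintro ⟨hA, hu, hv⟩
      rcases mem_cut.1 hA with ⟨F, hF, rfl⟩ | ⟨hh, hhm, rfl⟩
      · exact ⟨F, ⟨hF, (mem_rnF_inl.1 hu).1, ((mem_rnF_hex hw).1 hv).1⟩, rfl⟩
      · exact absurd hu inl_not_mem_capF
    · rintro ⟨F, ⟨hF, hxF, hwF⟩, rfl⟩
      have hc : σ F i = c := (sigma_eq_of_mem hσ h3 hxC hF hF₀ hxF hwF hx0 hw0).trans hc0
      exact ⟨rnF_mem_cut hF, mem_rnF_inl.2 ⟨hxF, hxC⟩, (mem_rnF_hex hw).2 ⟨hwF, hc⟩⟩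
  rw [hset, Finset.card_image_of_injective _ (rnF_inj hw)]
  exact h2f {x, w i} (Finset.card_pair hxw) ⟨F₀, hF₀, by
    rw [Finset.insert_subset_iff, Finset.singleton_subset_iff]; exact ⟨hx0, hw0⟩⟩

private lemma e2f_hex_hex {faces : Finset (Finset V)} (hw : Function.Injective w)
    (hσ : CoherentOneSided faces w σ) {p q : Fin 3 × Bool} (hpq : p ≠ q)
    (hhex : ({p, q} : Finset (Fin 3 × Bool)) ∈ hexEdges) :
    ((cutCapOneSided faces w σ).filter fun A =>
      ({Sum.inr (Sum.inl p), Sum.inr (Sum.inl q)} :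
        Finset (V ⊕ (Fin 3 × Bool) ⊕ Unit)) ⊆ A).card = 2 := by
  obtain ⟨F₁, hF₁eq⟩ := Finset.card_eq_one.1 (hσ.2.2 {p, q} hhex)
  have hF₁mem : F₁ ∈ faces ∧ ∃ i j : Fin 3, i ≠ j ∧ ({w i, w j} : Finset V) ⊆ F₁ ∧
      ({(i, σ F₁ i), (j, σ F₁ j)} : Finset (Fin 3 × Bool)) = {p, q} := by
    have : F₁ ∈ faces.filter fun F => ∃ i j : Fin 3, i ≠ j ∧ ({w i, w j} : Finset V) ⊆ F ∧
        ({(i, σ F i), (j, σ F j)} : Finset (Fin 3 × Bool)) = {p, q} :=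
      hF₁eq ▸ Finset.mem_singleton_self F₁
    exact Finset.mem_filter.1 this
  obtain ⟨hF₁, i, j, hij, hwsub, hheq⟩ := hF₁mem
  have hwiF : w i ∈ F₁ := hwsub (Finset.mem_insert_self _ _)
  have hwjF : w j ∈ F₁ := hwsub (by simp)
  have key : ∀ r ∈ ({(i, σ F₁ i), (j, σ F₁ j)} : Finset (Fin 3 × Bool)),
      (Sum.inr (Sum.inl r) : V ⊕ (Fin 3 × Bool) ⊕ Unit) ∈ rnF w σ F₁ := by
    intro r hr
    rw [Finset.mem_insert, Finset.mem_singleton] at hr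
    rcases hr with rfl | rfl
    · exact (mem_rnF_hex hw).2 ⟨hwiF, rfl⟩
    · exact (mem_rnF_hex hw).2 ⟨hwjF, rfl⟩
  have hpm : p ∈ ({(i, σ F₁ i), (j, σ F₁ j)} : Finset (Fin 3 × Bool)) := by
    rw [hheq]; exact Finset.mem_insert_self _ _
  have hqm : q ∈ ({(i, σ F₁ i), (j, σ F₁ j)} : Finset (Fin 3 × Bool)) := by
    rw [hheq]; simp
  have hset : ((cutCapOneSided faces w σ).filter fun A =>
      ({Sum.inr (Sum.inl p), Sum.inr (Sum.inl q)} :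
        Finset (V ⊕ (Fin 3 × Bool) ⊕ Unit)) ⊆ A)
      = {rnF w σ F₁, capF {p, q}} := by
    ext A
    simp only [Finset.mem_filter, Finset.mem_insert, Finset.mem_singleton,
      Finset.insert_subset_iff, Finset.singleton_subset_iff]
    constructor
    · rintro ⟨hA, hu, hv⟩
      rcases mem_cut.1 hA with ⟨F, hF, rfl⟩ | ⟨hh, hhm, rfl⟩
      · obtain ⟨ip, cp⟩ := p
        obtain ⟨iq, cq⟩ := q
        obtain ⟨hwpF, hcp⟩ := (mem_rnF_hex hw).1 hu
        obtain ⟨hwqF, hcq⟩ := (mem_rnF_hex hw).1 hv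
        have hii : ip ≠ iq := by
          intro hc
          subst hc
          exact hpq (by rw [← hcp, ← hcq])
        have : F ∈ faces.filter fun F => ∃ i j : Fin 3, i ≠ j ∧
            ({w i, w j} : Finset V) ⊆ F ∧
            ({(i, σ F i), (j, σ F j)} : Finset (Fin 3 × Bool)) = {(ip, cp), (iq, cq)} := by
          rw [Finset.mem_filter]
          exact ⟨hF, ip, iq, hii, by
            rw [Finset.insert_subset_iff, Finset.singleton_subset_iff]
            exact ⟨hwpF, hwqF⟩, by rw [hcp, hcq]⟩
        rw [hF₁eq, Finset.mem_singleton] at this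
        exact Or.inl (by rw [this])
      · have hsubh : ({p, q} : Finset (Fin 3 × Bool)) ⊆ hh := by
          rw [Finset.insert_subset_iff, Finset.singleton_subset_iff]
          exact ⟨hex_mem_capF.1 hu, hex_mem_capF.1 hv⟩
        have : ({p, q} : Finset (Fin 3 × Bool)) = hh :=
          Finset.eq_of_subset_of_card_le hsubh
            (by rw [hex_card hh hhm, Finset.card_pair hpq])
        exact Or.inr (by rw [← this])
    · rintro (rfl | rfl)
      · exact ⟨rnF_mem_cut hF₁, key p hpm, key q hqm⟩
      · exact ⟨capF_mem_cut hhex, hex_mem_capF.2 (Finset.mem_insert_self _ _),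
          hex_mem_capF.2 (by simp)⟩
  rw [hset]
  exact Finset.card_pair fun hc => ap_not_mem_rnF (hc ▸ ap_mem_capF)

private lemma e2f_ap_hex {faces : Finset (Finset V)} {p : Fin 3 × Bool} :
    ((cutCapOneSided faces w σ).filter fun A =>
      ({ap, Sum.inr (Sum.inl p)} : Finset (V ⊕ (Fin 3 × Bool) ⊕ Unit)) ⊆ A).card = 2 := by
  have hset : ((cutCapOneSided faces w σ).filter fun A =>
      ({ap, Sum.inr (Sum.inl p)} : Finset (V ⊕ (Fin 3 × Bool) ⊕ Unit)) ⊆ A)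
      = (hexEdges.filter fun h => p ∈ h).image (capF (V := V)) := by
    ext A
    simp only [Finset.mem_filter, Finset.mem_image, Finset.insert_subset_iff,
      Finset.singleton_subset_iff]
    constructor
    · rintro ⟨hA, hu, hv⟩
      rcases mem_cut.1 hA with ⟨F, hF, rfl⟩ | ⟨hh, hhm, rfl⟩
      · exact absurd hu ap_not_mem_rnF
      · exact ⟨hh, ⟨hhm, hex_mem_capF.1 hv⟩, rfl⟩
    · rintro ⟨hh, ⟨hhm, hph⟩, rfl⟩
      exact ⟨capF_mem_cut hhm, ap_mem_capF, hex_mem_capF.2 hph⟩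
  rw [hset, Finset.card_image_of_injective _ capF_inj, hex_filter_card]

private lemma cut_edge_two_faces {faces : Finset (Finset V)} (hw : Function.Injective w)
    (h : IsTriangulation faces) (hσ : CoherentOneSided faces w σ) :
    ∀ e : Finset (V ⊕ (Fin 3 × Bool) ⊕ Unit), e.card = 2 →
      (∃ A ∈ cutCapOneSided faces w σ, e ⊆ A) →
      ((cutCapOneSided faces w σ).filter fun A => e ⊆ A).card = 2 := by
  rintro e hcard ⟨A₀, hA₀, heA⟩
  obtain ⟨u, v, huv, rfl⟩ := Finset.card_eq_two.1 hcard
  have hu : u ∈ A₀ := heA (Finset.mem_insert_self _ _)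
  have hv : v ∈ A₀ := heA (by simp)
  clear heA hcard
  rcases u with x | p | u' <;> rcases v with y | q | v'
  -- inl / inl
  · rcases mem_cut.1 hA₀ with ⟨F₀, hF₀, rfl⟩ | ⟨hh, hhm, rfl⟩
    · obtain ⟨hx0, hxC⟩ := mem_rnF_inl.1 hu
      obtain ⟨hy0, hyC⟩ := mem_rnF_inl.1 hv
      exact e2f_inl_inl hw h.edge_two_faces (fun hc => huv (by rw [hc])) hxC hyC hF₀ hx0 hy0
    · exact absurd hu inl_not_mem_capF
  -- inl / hex
  · rcases mem_cut.1 hA₀ with ⟨F₀, hF₀, rfl⟩ | ⟨hh, hhm, rfl⟩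
    · obtain ⟨i, c⟩ := q
      obtain ⟨hx0, hxC⟩ := mem_rnF_inl.1 hu
      obtain ⟨hw0, hc0⟩ := (mem_rnF_hex hw).1 hv
      exact e2f_inl_hex hw hσ h.card_three h.edge_two_faces hxC hF₀ hx0 hw0 hc0
    · exact absurd hu inl_not_mem_capF
  -- inl / ap
  · rcases mem_cut.1 hA₀ with ⟨F₀, hF₀, rfl⟩ | ⟨hh, hhm, rfl⟩
    · cases v'; exact absurd hv ap_not_mem_rnF
    · exact absurd hu inl_not_mem_capF
  -- hex / inl
  · rw [Finset.pair_comm]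
    rcases mem_cut.1 hA₀ with ⟨F₀, hF₀, rfl⟩ | ⟨hh, hhm, rfl⟩
    · obtain ⟨i, c⟩ := p
      obtain ⟨hy0, hyC⟩ := mem_rnF_inl.1 hv
      obtain ⟨hw0, hc0⟩ := (mem_rnF_hex hw).1 hu
      exact e2f_inl_hex hw hσ h.card_three h.edge_two_faces hyC hF₀ hy0 hw0 hc0
    · exact absurd hv inl_not_mem_capF
  -- hex / hex
  · have hpq : p ≠ q := fun hc => huv (by rw [hc])
    have hhex : ({p, q} : Finset (Fin 3 × Bool)) ∈ hexEdges := by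
      rcases mem_cut.1 hA₀ with ⟨F₀, hF₀, rfl⟩ | ⟨hh, hhm, rfl⟩
      · obtain ⟨ip, cp⟩ := p
        obtain ⟨iq, cq⟩ := q
        obtain ⟨hwpF, hcp⟩ := (mem_rnF_hex hw).1 hu
        obtain ⟨hwqF, hcq⟩ := (mem_rnF_hex hw).1 hv
        have hii : ip ≠ iq := by
          intro hc
          subst hc
          exact hpq (by rw [← hcp, ← hcq])
        have := hσ.2.1 F₀ hF₀ ip iq hii (by
          rw [Finset.insert_subset_iff, Finset.singleton_subset_iff]
          exact ⟨hwpF, hwqF⟩)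
        rwa [hcp, hcq] at this
      · have hsubh : ({p, q} : Finset (Fin 3 × Bool)) ⊆ hh := by
          rw [Finset.insert_subset_iff, Finset.singleton_subset_iff]
          exact ⟨hex_mem_capF.1 hu, hex_mem_capF.1 hv⟩
        have heqh : ({p, q} : Finset (Fin 3 × Bool)) = hh :=
          Finset.eq_of_subset_of_card_le hsubh
            (by rw [hex_card hh hhm, Finset.card_pair hpq])
        rwa [heqh]
    exact e2f_hex_hex hw hσ hpq hhex
  -- hex / ap
  · cases v'
    rw [Finset.pair_comm]
    exact e2f_ap_hex
  -- ap / inl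
  · rw [Finset.pair_comm]
    rcases mem_cut.1 hA₀ with ⟨F₀, hF₀, rfl⟩ | ⟨hh, hhm, rfl⟩
    · cases u'; exact absurd hu ap_not_mem_rnF
    · exact absurd hv inl_not_mem_capF
  -- ap / hex
  · cases u'
    exact e2f_ap_hex
  -- ap / ap
  · cases u'; cases v'; exact absurd rfl huv

/-! ### Link connectivity of the cut complex -/

private lemma linkAdj_symm {α : Type*} [DecidableEq α] {fs : Finset (Finset α)} {v : α} :
    Symmetric (LinkAdj fs v) := by
  rintro A B ⟨hA, hB, hv, hc⟩
  exact ⟨hB, hA, by rwa [Finset.inter_comm], by rwa [Finset.inter_comm]⟩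

private lemma edge_step {faces : Finset (Finset V)} (hw : Function.Injective w)
    (hσ : CoherentOneSided faces w σ) {F : Finset V} (hF : F ∈ faces) {i j : Fin 3}
    (hij : i ≠ j) (hwi : w i ∈ F) (hwj : w j ∈ F) :
    LinkAdj (cutCapOneSided faces w σ) (Sum.inr (Sum.inl (i, σ F i)))
      (rnF w σ F) (capF {(i, σ F i), (j, σ F j)}) ∧
      ({(i, σ F i), (j, σ F j)} : Finset (Fin 3 × Bool)) ∈ hexEdges := by
  have hhex := hσ.2.1 F hF i j hij (by
    rw [Finset.insert_subset_iff, Finset.singleton_subset_iff]; exact ⟨hwi, hwj⟩)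
  have hinter := inter_rnF_capF_eq (σ := σ) hw hij hwi hwj
  refine ⟨⟨rnF_mem_cut hF, capF_mem_cut hhex, ?_, ?_⟩, hhex⟩
  · rw [Finset.mem_inter] at *
    constructor
    · exact (mem_rnF_hex hw).2 ⟨hwi, rfl⟩
    · exact hex_mem_capF.2 (Finset.mem_insert_self _ _)
  · rw [hinter, Finset.card_image_of_injective _ (by intro a b hab; simpa using hab),
      hexpair_card hij]

private lemma cap_cap_step {faces : Finset (Finset V)} {p : Fin 3 × Bool}
    {h₁ h₂ : Finset (Fin 3 × Bool)} (hm₁ : h₁ ∈ hexEdges) (hm₂ : h₂ ∈ hexEdges)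
    (hp₁ : p ∈ h₁) (hp₂ : p ∈ h₂) :
    Relation.ReflTransGen (LinkAdj (cutCapOneSided faces w σ) (Sum.inr (Sum.inl p)))
      (capF h₁) (capF h₂) := by
  by_cases hhh : h₁ = h₂
  · rw [hhh]
  · refine Relation.ReflTransGen.single ⟨capF_mem_cut hm₁, capF_mem_cut hm₂, ?_, ?_⟩
    · rw [capF_inter]
      exact Finset.mem_insert.2 (Or.inr
        (Finset.mem_image.2 ⟨p, Finset.mem_inter.2 ⟨hp₁, hp₂⟩, rfl⟩))
    · rw [capF_inter_card]
      have hle := hex_inter_le h₁ hm₁ h₂ hm₂ hhh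
      have hge : 1 ≤ (h₁ ∩ h₂).card :=
        Finset.card_pos.2 ⟨p, Finset.mem_inter.2 ⟨hp₁, hp₂⟩⟩
      omega

private lemma reach_cap {faces : Finset (Finset V)} (hw : Function.Injective w)
    (h : IsTriangulation faces) (hσ : CoherentOneSided faces w σ)
    (hcyc : IsTriCycle faces {w 0, w 1, w 2}) {i : Fin 3} {c : Bool}
    {F : Finset V} (hF : F ∈ faces) (hwF : w i ∈ F) (hcF : σ F i = c) :
    ∃ h' ∈ hexEdges, (i, c) ∈ h' ∧
      Relation.ReflTransGen
        (LinkAdj (cutCapOneSided faces w σ) (Sum.inr (Sum.inl (i, c))))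
        (rnF w σ F) (capF h') := by
  obtain ⟨j, hj⟩ := exists_ne i
  have hij : i ≠ j := hj.symm
  obtain ⟨-, G₀, hG₀, hsubG₀⟩ := edgeSet_spec (cyc_edge_mem hw hcyc hij)
  have hwiG₀ : w i ∈ G₀ := hsubG₀ (Finset.mem_insert_self _ _)
  have hwjG₀ : w j ∈ G₀ := hsubG₀ (by simp)
  have hpath := h.link_connected (w i) F hF G₀ hG₀ hwF hwiG₀
  revert hcF
  refine Relation.ReflTransGen.head_induction_on
    (motive := fun a _ => σ a i = c → ∃ h' ∈ hexEdges, (i, c) ∈ h' ∧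
      Relation.ReflTransGen
        (LinkAdj (cutCapOneSided faces w σ) (Sum.inr (Sum.inl (i, c))))
        (rnF w σ a) (capF h')) hpath ?_ ?_
  · intro hcG
    subst hcG
    obtain ⟨st, hhex⟩ := edge_step hw hσ hG₀ hij hwiG₀ hwjG₀
    exact ⟨_, hhex, Finset.mem_insert_self _ _, Relation.ReflTransGen.single st⟩
  · intro a a₂ hstep hpath₂ IH hca
    obtain ⟨haf, ha₂f, hwm, h2⟩ := hstep
    have hy : ∃ y, y ≠ w i ∧ a ∩ a₂ = {w i, y} := by
      obtain ⟨s, t, hst, hpair⟩ := Finset.card_eq_two.1 h2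
      rcases Finset.mem_insert.1 (hpair ▸ hwm) with hs | ht
      · exact ⟨t, fun hc => hst (hs ▸ hc.symm), by rw [hpair, hs]⟩
      · rw [Finset.mem_singleton] at ht
        exact ⟨s, fun hc => hst (ht ▸ hc), by rw [hpair, ht, Finset.pair_comm]⟩
    obtain ⟨y, hyne, hinter⟩ := hy
    have hy_mem : y ∈ a ∩ a₂ := by rw [hinter]; simp
    by_cases hyC : y ∈ Cset w
    · have hk : ∃ k, y = w k := by
        rw [Cset, Finset.mem_insert, Finset.mem_insert, Finset.mem_singleton] at hyC
        rcases hyC with rfl | rfl | rfl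
        · exact ⟨0, rfl⟩
        · exact ⟨1, rfl⟩
        · exact ⟨2, rfl⟩
      obtain ⟨k, rfl⟩ := hk
      have hik : i ≠ k := fun hc => hyne (by rw [hc])
      have hwk_a : w k ∈ a := (Finset.mem_inter.1 hy_mem).1
      have hwi_a : w i ∈ a := (Finset.mem_inter.1 hwm).1
      subst hca
      obtain ⟨st, hhex⟩ := edge_step hw hσ haf hik hwi_a hwk_a
      exact ⟨_, hhex, Finset.mem_insert_self _ _, Relation.ReflTransGen.single st⟩
    · have hnc : ¬ (a ∩ a₂) ⊆ Cset w := fun hcc => hyC (hcc hy_mem)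
      have hσe : σ a i = σ a₂ i := hσ.1 a haf a₂ ha₂f i h2 hwm hnc
      obtain ⟨h', hm', hp', hr'⟩ := IH (by rw [← hσe, hca])
      refine ⟨h', hm', hp', Relation.ReflTransGen.head ?_ hr'⟩
      have heq := inter_rnF_eq hσ hw haf ha₂f h2 hnc
      refine ⟨rnF_mem_cut haf, rnF_mem_cut ha₂f, ?_, ?_⟩
      · rw [heq]
        refine Finset.mem_image.2 ⟨w i, hwm, ?_⟩
        rw [renameOneSided_eval_w hw, hca]
      · rw [heq, Finset.card_image_of_injective _ (renameOneSided_inj hw), h2]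

private lemma cut_link_connected {faces : Finset (Finset V)} (hw : Function.Injective w)
    (h : IsTriangulation faces) (hσ : CoherentOneSided faces w σ)
    (hcyc : IsTriCycle faces {w 0, w 1, w 2}) :
    ∀ v : V ⊕ (Fin 3 × Bool) ⊕ Unit, ∀ A ∈ cutCapOneSided faces w σ,
      ∀ B ∈ cutCapOneSided faces w σ, v ∈ A → v ∈ B →
      Relation.ReflTransGen (LinkAdj (cutCapOneSided faces w σ) v) A B := by
  intro v A hA B hB hvA hvB
  have hsymm : Symmetric (Relation.ReflTransGen (LinkAdj (cutCapOneSided faces w σ) v)) :=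
    fun a b hab => by
      haveI : Std.Symm (LinkAdj (cutCapOneSided faces w σ) v) :=
        ⟨fun x y hh => linkAdj_symm (fs := cutCapOneSided faces w σ) (v := v) hh⟩
      exact Std.Symm.symm _ _ hab
  rcases v with x | ⟨i, c⟩ | u'
  · rcases mem_cut.1 hA with ⟨F, hF, rfl⟩ | ⟨hh, hhm, rfl⟩
    swap
    · exact absurd hvA inl_not_mem_capF
    rcases mem_cut.1 hB with ⟨G, hG, rfl⟩ | ⟨hh, hhm, rfl⟩
    swap
    · exact absurd hvB inl_not_mem_capF
    obtain ⟨hxF, hxC⟩ := mem_rnF_inl.1 hvA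
    obtain ⟨hxG, -⟩ := mem_rnF_inl.1 hvB
    exact Relation.ReflTransGen.lift (rnF w σ) (fun a b hab => linkAdj_rnF hσ hw hxC hab) _ _
      (h.link_connected x F hF G hG hxF hxG)
  · have hto : ∀ A' ∈ cutCapOneSided faces w σ, Sum.inr (Sum.inl (i, c)) ∈ A' →
        ∃ h' ∈ hexEdges, (i, c) ∈ h' ∧
          Relation.ReflTransGen
            (LinkAdj (cutCapOneSided faces w σ) (Sum.inr (Sum.inl (i, c)))) A' (capF h') := by
      intro A' hA' hv'
      rcases mem_cut.1 hA' with ⟨F, hF, rfl⟩ | ⟨hh, hhm, rfl⟩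
      · obtain ⟨hwF, hcF⟩ := (mem_rnF_hex hw).1 hv'
        exact reach_cap hw h hσ hcyc hF hwF hcF
      · exact ⟨hh, hhm, hex_mem_capF.1 hv', Relation.ReflTransGen.refl⟩
    obtain ⟨h₁, hm₁, hp₁, hr₁⟩ := hto A hA hvA
    obtain ⟨h₂, hm₂, hp₂, hr₂⟩ := hto B hB hvB
    exact (hr₁.trans (cap_cap_step hm₁ hm₂ hp₁ hp₂)).trans (hsymm hr₂)
  · cases u'
    rcases mem_cut.1 hA with ⟨F, hF, rfl⟩ | ⟨h₁, hm₁, rfl⟩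
    · exact absurd hvA ap_not_mem_rnF
    rcases mem_cut.1 hB with ⟨G, hG, rfl⟩ | ⟨h₂, hm₂, rfl⟩
    · exact absurd hvB ap_not_mem_rnF
    refine Relation.ReflTransGen.lift capF (fun a b hab => ?_) _ _ (hexConn h₁ hm₁ h₂ hm₂)
    obtain ⟨ha, hb, hcd⟩ := hab
    exact ⟨capF_mem_cut ha, capF_mem_cut hb,
      by rw [capF_inter]; exact Finset.mem_insert_self _ _,
      by rw [capF_inter_card, hcd]⟩

/-! ### Global connectivity -/

private lemma faceAdj_symm {α : Type*} [DecidableEq α] {fs : Finset (Finset α)} :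
    Symmetric (FaceAdj fs) := by
  rintro A B ⟨hA, hB, hc⟩
  exact ⟨hB, hA, by rwa [Finset.inter_comm]⟩

private lemma cap_to_rnF {faces : Finset (Finset V)} (hw : Function.Injective w)
    (hσ : CoherentOneSided faces w σ) {hh : Finset (Fin 3 × Bool)} (hhm : hh ∈ hexEdges) :
    ∃ F ∈ faces, FaceAdj (cutCapOneSided faces w σ) (capF hh) (rnF w σ F) := by
  obtain ⟨F₁, hF₁eq⟩ := Finset.card_eq_one.1 (hσ.2.2 hh hhm)
  have hmem : F₁ ∈ faces.filter fun F => ∃ i j : Fin 3, i ≠ j ∧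
      ({w i, w j} : Finset V) ⊆ F ∧
      ({(i, σ F i), (j, σ F j)} : Finset (Fin 3 × Bool)) = hh :=
    hF₁eq ▸ Finset.mem_singleton_self F₁
  obtain ⟨hF₁, i, j, hij, hwsub, hheq⟩ := Finset.mem_filter.1 hmem
  refine ⟨F₁, hF₁, capF_mem_cut hhm, rnF_mem_cut hF₁, ?_⟩
  rw [Finset.inter_comm, ← hheq,
    inter_rnF_capF_eq hw hij (hwsub (Finset.mem_insert_self _ _)) (hwsub (by simp)),
    Finset.card_image_of_injective _ (by intro a b hab; simpa using hab), hexpair_card hij]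

private lemma cut_connected {faces : Finset (Finset V)} (hw : Function.Injective w)
    (hσ : CoherentOneSided faces w σ) (hns : Nonseparating faces {w 0, w 1, w 2}) :
    ∀ A ∈ cutCapOneSided faces w σ, ∀ B ∈ cutCapOneSided faces w σ,
      Relation.ReflTransGen (FaceAdj (cutCapOneSided faces w σ)) A B := by
  intro A hA B hB
  have hsymm : Symmetric (Relation.ReflTransGen (FaceAdj (cutCapOneSided faces w σ))) :=
    fun a b hab => by
      haveI : Std.Symm (FaceAdj (cutCapOneSided faces w σ)) :=
        ⟨fun x y hh => faceAdj_symm (fs := cutCapOneSided faces w σ) hh⟩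
      exact Std.Symm.symm _ _ hab
  have hrn : ∀ F ∈ faces, ∀ G ∈ faces,
      Relation.ReflTransGen (FaceAdj (cutCapOneSided faces w σ)) (rnF w σ F) (rnF w σ G) := by
    intro F hF G hG
    exact Relation.ReflTransGen.lift (rnF w σ) (fun a b hab => faceAdj_rnF hσ hw hab) _ _ (hns F hF G hG)
  have hred : ∀ A' ∈ cutCapOneSided faces w σ, ∃ F ∈ faces,
      Relation.ReflTransGen (FaceAdj (cutCapOneSided faces w σ)) A' (rnF w σ F) := by
    intro A' hA'
    rcases mem_cut.1 hA' with ⟨F, hF, rfl⟩ | ⟨hh, hhm, rfl⟩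
    · exact ⟨F, hF, Relation.ReflTransGen.refl⟩
    · obtain ⟨F, hF, hadj⟩ := cap_to_rnF hw hσ hhm
      exact ⟨F, hF, Relation.ReflTransGen.single hadj⟩
  obtain ⟨F, hF, hrA⟩ := hred A hA
  obtain ⟨G, hG, hrB⟩ := hred B hB
  exact (hrA.trans (hrn F hF G hG)).trans (hsymm hrB)
end Stmt8Aux
/-- cutting a triangulation along a nonseparating one-sided 3-cycle and
capping the boundary hexagon with a new vertex yields a triangulation of a closed
surface whose Euler genus is one less. -/
theorem stmt8 [DecidableEq V] (faces : Finset (Finset V)) (h : IsTriangulation faces)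
    (w : Fin 3 → V) (hw : Function.Injective w)
    (hcyc : IsTriCycle faces {w 0, w 1, w 2})
    (hns : Nonseparating faces {w 0, w 1, w 2})
    (hos : OneSided faces {w 0, w 1, w 2})
    (σ : Finset V → Fin 3 → Bool) (hσ : CoherentOneSided faces w σ) :
    IsTriangulation (cutCapOneSided faces w σ) ∧
    eulerGenus (cutCapOneSided faces w σ) = eulerGenus faces - 1 := by
  have htri : IsTriangulation (cutCapOneSided faces w σ) :=
    { nonempty := cut_nonempty h.nonempty
      card_three := cut_card_three hw h.card_three
      edge_two_faces := cut_edge_two_faces hw h hσ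
      link_connected := cut_link_connected hw h hσ hcyc
      connected := cut_connected hw hσ hns }
  refine ⟨htri, ?_⟩
  have e2old := two_mul_card_edgeSet faces h.card_three h.edge_two_faces
  have e2new := two_mul_card_edgeSet (cutCapOneSided faces w σ)
    htri.card_three htri.edge_two_faces
  have hv := cut_vertexSet_card (σ := σ) h.nonempty hw (Cset_subset hw hcyc)
  have hf := cut_card (σ := σ) (faces := faces) hw
  unfold eulerGenus eulerChar
  omega
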